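/- Let W : [1, r_0] → ℝ be a C^2 solution of (1 - 1/r) W'' + (1/r^2) W' + (1/r^2) W(1 - W^2) = 0 with W(1) = a, W'(1) = -a(1-a^2), for some 0 < a ≤ 1, and suppose |W| ≤ B on [1, r_0] for some 0 < B ≤ 1. Then |W'(r)| ≤ B for all r ∈ [1, r_0]. -/

import Mathlib

open Real Set

theorem deriv_bound_of_solution
    (W : ℝ → ℝ) (r0 a B : ℝ) (hr0 : 1 ≤ r0)
    (ha : 0 < a) (ha1 : a ≤ 1) (hB : 0 < B) (hB1 : B ≤ 1)
    (hreg : ContDiffOn ℝ 2 W (Icc 1 r0))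
    (hode : ∀ r ∈ Icc (1:ℝ) r0,
      (1 - 1 / r) * deriv (deriv W) r + (1 / r ^ 2) * deriv W r
        + (1 / r ^ 2) * W r * (1 - (W r) ^ 2) = 0)
    (hW1 : W 1 = a) (hW1' : deriv W 1 = -a * (1 - a ^ 2))
    (hbd : ∀ r ∈ Icc (1:ℝ) r0, |W r| ≤ B) :
    ∀ r ∈ Icc (1:ℝ) r0, |deriv W r| ≤ B := by
  -- a ≤ B
  have h1mem : (1:ℝ) ∈ Icc (1:ℝ) r0 := ⟨le_refl _, hr0⟩
  have haB : a ≤ B := by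
    have := hbd 1 h1mem
    rw [hW1, abs_of_pos ha] at this
    exact this
  -- bound at r = 1
  have hbd1 : |deriv W 1| ≤ B := by
    rw [hW1']
    have h1 : (0:ℝ) ≤ 1 - a ^ 2 := by nlinarith
    have : |-a * (1 - a ^ 2)| = a * (1 - a ^ 2) := by
      rw [abs_of_nonpos (by nlinarith)]; ring
    rw [this]
    nlinarith
  rcases eq_or_lt_of_le hr0 with hr0e | hr0lt
  · -- degenerate case r0 = 1
    intro r hr
    have : r = 1 := le_antisymm (hr0e ▸ hr.2) hr.1
    rw [this]; exact hbd1
  -- main case 1 < r0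
  set g : ℝ → ℝ := derivWithin W (Icc 1 r0) with hg
  have huniq : UniqueDiffOn ℝ (Icc (1:ℝ) r0) := uniqueDiffOn_Icc hr0lt
  have hgcont : ContinuousOn g (Icc 1 r0) :=
    hreg.continuousOn_derivWithin huniq (by norm_num)
  -- on the interior, g = deriv W
  have hgd : ∀ r ∈ Ioo (1:ℝ) r0, g r = deriv W r := by
    intro r hr
    exact derivWithin_of_mem_nhds (Icc_mem_nhds hr.1 hr.2)
  set V : ℝ → ℝ := fun r => (1 - r⁻¹) * g r with hV
  -- V is continuous on Icc
  have hVcont : ContinuousOn V (Icc 1 r0) := by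
    apply ContinuousOn.mul _ hgcont
    apply ContinuousOn.sub continuousOn_const
    exact ContinuousOn.inv₀ continuousOn_id (fun r hr => by
      have : (1:ℝ) ≤ r := hr.1; positivity)
  -- derivative of V on the interior
  have hVderiv : ∀ r ∈ Ioo (1:ℝ) r0,
      HasDerivAt V (-(1 / r ^ 2 * W r * (1 - (W r) ^ 2))) r := by
    intro r hr
    have hrpos : (0:ℝ) < r := lt_trans one_pos hr.1
    have hrne : r ≠ 0 := ne_of_gt hrpos
    -- deriv W has derivative deriv (deriv W) r at r
    have hCDa : ContDiffAt ℝ 2 W r := hreg.contDiffAt (Icc_mem_nhds hr.1 hr.2)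
    obtain ⟨u, hu, hCDu⟩ := hCDa.contDiffOn (le_refl (2 : WithTop ℕ∞)) (by norm_num)
    obtain ⟨t, htu, hto, hrt⟩ := mem_nhds_iff.mp hu
    have hCDt : ContDiffOn ℝ 2 W t := hCDu.mono htu
    have hdW : ContDiffOn ℝ 1 (deriv W) t :=
      hCDt.deriv_of_isOpen hto (by norm_num)
    have hdWr : DifferentiableAt ℝ (deriv W) r := by
      have := (hdW r hrt).differentiableWithinAt (by norm_num)
      exact this.differentiableAt (hto.mem_nhds hrt)
    have hD2 : HasDerivAt (deriv W) (deriv (deriv W) r) r := hdWr.hasDerivAt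
    -- (1 - r⁻¹)' = r⁻²
    have h1 : HasDerivAt (fun s : ℝ => 1 - s⁻¹) (r⁻¹ ^ 2) r := by
      have := (hasDerivAt_inv hrne).const_sub 1
      rw [neg_neg, ← inv_pow] at this
      exact this
    -- product rule, for the function (1 - s⁻¹) * deriv W s
    have hprod : HasDerivAt (fun s => (1 - s⁻¹) * deriv W s)
        (r⁻¹ ^ 2 * deriv W r + (1 - r⁻¹) * deriv (deriv W) r) r := h1.mul hD2
    -- V agrees with this function near r
    have heq : V =ᶠ[nhds r] fun s => (1 - s⁻¹) * deriv W s := by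
      filter_upwards [Ioo_mem_nhds hr.1 hr.2] with s hs
      simp only [hV, hgd s hs]
    have hVr : HasDerivAt V
        (r⁻¹ ^ 2 * deriv W r + (1 - r⁻¹) * deriv (deriv W) r) r :=
      hprod.congr_of_eventuallyEq heq
    -- use the ODE to rewrite the derivative
    have hodev := hode r ⟨le_of_lt hr.1, le_of_lt hr.2⟩
    have hval : r⁻¹ ^ 2 * deriv W r + (1 - r⁻¹) * deriv (deriv W) r
        = -(1 / r ^ 2 * W r * (1 - (W r) ^ 2)) := by
      have h2 : (1:ℝ) / r ^ 2 = r⁻¹ ^ 2 := by field_simp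
      have h3 : (1:ℝ) / r = r⁻¹ := one_div r
      rw [h2, h3] at hodev
      rw [h2]
      linarith
    rwa [hval] at hVr
  -- bound on the derivative of V
  have hVbd : ∀ r ∈ Ioo (1:ℝ) r0,
      |(-(1 / r ^ 2 * W r * (1 - (W r) ^ 2)))| ≤ B / r ^ 2 := by
    intro r hr
    have hrpos : (0:ℝ) < r := lt_trans one_pos hr.1
    have hWr := hbd r ⟨le_of_lt hr.1, le_of_lt hr.2⟩
    have hW2 : (W r) ^ 2 ≤ 1 := by
      have : |W r| ≤ 1 := le_trans hWr hB1
      nlinarith [abs_nonneg (W r), sq_abs (W r)]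
    have h1 : (0:ℝ) ≤ 1 - (W r) ^ 2 := by linarith
    have h2 : 1 - (W r) ^ 2 ≤ 1 := by nlinarith [sq_nonneg (W r)]
    rw [abs_neg, abs_mul, abs_mul, abs_of_pos (show (0:ℝ) < 1 / r ^ 2 by positivity),
      abs_of_nonneg h1]
    have : |W r| * (1 - (W r) ^ 2) ≤ B := by
      nlinarith [abs_nonneg (W r)]
    calc 1 / r ^ 2 * |W r| * (1 - (W r) ^ 2) = 1 / r ^ 2 * (|W r| * (1 - (W r) ^ 2)) := by ring
      _ ≤ 1 / r ^ 2 * B := by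
          apply mul_le_mul_of_nonneg_left this (by positivity)
      _ = B / r ^ 2 := by ring
  -- two auxiliary monotone functions
  have hBcont : ContinuousOn (fun r : ℝ => B * (1 - r⁻¹)) (Icc 1 r0) := by
    apply ContinuousOn.mul continuousOn_const
    apply ContinuousOn.sub continuousOn_const
    exact ContinuousOn.inv₀ continuousOn_id (fun r hr => by
      have : (1:ℝ) ≤ r := hr.1; positivity)
  have hint : interior (Icc (1:ℝ) r0) = Ioo 1 r0 := interior_Icc
  have hBder : ∀ r ∈ Ioo (1:ℝ) r0,
      HasDerivAt (fun s : ℝ => B * (1 - s⁻¹)) (B / r ^ 2) r := by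
    intro r hr
    have hrne : r ≠ 0 := ne_of_gt (lt_trans one_pos hr.1)
    have := ((hasDerivAt_inv hrne).const_sub 1).const_mul B
    rw [neg_neg, ← div_eq_mul_inv] at this
    exact this
  -- φ = B(1-1/r) - V is monotone
  have key : ∀ (σ : ℝ), σ = 1 ∨ σ = -1 → ∀ r ∈ Icc (1:ℝ) r0,
      σ * V r ≤ B * (1 - r⁻¹) := by
    intro σ hσ r hr
    have hφd : ∀ s ∈ Ioo (1:ℝ) r0,
        HasDerivAt (fun t => B * (1 - t⁻¹) - σ * V t)
          (B / s ^ 2 - σ * (-(1 / s ^ 2 * W s * (1 - (W s) ^ 2)))) s := by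
      intro s hs
      exact (hBder s hs).sub ((hVderiv s hs).const_mul σ)
    have hmono : MonotoneOn (fun t => B * (1 - t⁻¹) - σ * V t) (Icc 1 r0) := by
      apply monotoneOn_of_deriv_nonneg (convex_Icc 1 r0)
      · exact hBcont.sub (continuousOn_const.mul hVcont)
      · rw [hint]
        intro s hs
        exact ((hφd s hs).differentiableAt).differentiableWithinAt
      · rw [hint]
        intro s hs
        rw [(hφd s hs).deriv]
        have := hVbd s hs
        have hσ1 : |σ| = 1 := by rcases hσ with h | h <;> simp [h]
        have : |σ * (-(1 / s ^ 2 * W s * (1 - (W s) ^ 2)))| ≤ B / s ^ 2 := by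
          rw [abs_mul, hσ1, one_mul]; exact this
        have := abs_le.mp this
        linarith [this.2]
    have := hmono h1mem hr hr.1
    simp only [hV] at this ⊢
    have hV1 : (1 - (1:ℝ)⁻¹) * g 1 = 0 := by norm_num
    rw [hV1] at this
    simp only [inv_one] at this
    linarith
  -- conclude
  intro r hr
  rcases eq_or_lt_of_le hr.1 with h1 | h1
  · rw [← h1]; exact hbd1
  have hVb : |V r| ≤ B * (1 - r⁻¹) := by
    rw [abs_le]
    constructor
    · have := key (-1) (Or.inr rfl) r hr
      linarith [this]
    · have := key 1 (Or.inl rfl) r hr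
      linarith [this]
  have hrpos : (0:ℝ) < r := lt_trans one_pos h1
  have hfac : (0:ℝ) < 1 - r⁻¹ := by
    rw [sub_pos]
    exact inv_lt_one_of_one_lt₀ h1
  have hgb : |g r| ≤ B := by
    have : |V r| = (1 - r⁻¹) * |g r| := by
      rw [hV]
      simp only []
      rw [abs_mul, abs_of_pos hfac]
    rw [this] at hVb
    have := (mul_le_mul_iff_right₀ hfac).mp (by linarith : (1 - r⁻¹) * |g r| ≤ (1 - r⁻¹) * B)
    exact this
  rcases eq_or_lt_of_le hr.2 with h2 | h2
  · -- r = r0 : case split on differentiability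
    by_cases hdiff : DifferentiableAt ℝ W r
    · have : deriv W r = g r := (hdiff.derivWithin (huniq r hr)).symm
      rw [this]; exact hgb
    · rw [deriv_zero_of_not_differentiableAt hdiff]
      simpa using le_of_lt hB
  · rw [← hgd r ⟨h1, h2⟩]
    exact hgb
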